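/- Obstruction with fixed rows (Remark on StickfA): Let M : Fin 4 → Fin 2 → Bool satisfy M 0 0 = true, M 1 0 = false, M 1 1 = true, M 2 0 = true, M 2 1 = false, M 3 1 = true (the entries M 0 1 and M 3 0 arbitrary). Then for neither of the two column orders does the resulting matrix avoid patterns P2 and P3; consequently there is no Stick order for M and no Stick order for the column-swapped matrix M' i p := M i (1 - p). -/
import Mathlib


def StickOrder {n m : ℕ} (M : Fin n → Fin m → Bool) : Prop :=
  ∃ (ra : Fin n → ℕ) (rb : Fin m → ℕ),
    StrictMono ra ∧ StrictMono rb ∧ (∀ i p, ra i ≠ rb p) ∧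
    ∀ j p, M j p = true ↔
      (ra j < rb p ∧ (∃ q, p ≤ q ∧ M j q = true) ∧ (∃ i, i ≤ j ∧ M i p = true))

def HEdge {n m : ℕ} (M : Fin n → Fin m → Bool) :
    Fin n ⊕ Fin m → Fin n ⊕ Fin m → Prop
  | Sum.inl i, Sum.inl i' => i < i'
  | Sum.inr p, Sum.inr p' => p < p'
  | Sum.inl i, Sum.inr p => M i p = true
  | Sum.inr p, Sum.inl j =>
      ∃ i, i < j ∧ ∃ q, p < q ∧ M i p = true ∧ M j p = false ∧ M j q = true

def P1 {n m : ℕ} (M : Fin n → Fin m → Bool) : Prop :=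
  ∃ i j k : Fin n, i < j ∧ j < k ∧ ∃ p q r : Fin m, p < q ∧ q < r ∧
    M i q = true ∧ M j q = false ∧ M j r = true ∧ M k p = true

def P2 {n m : ℕ} (M : Fin n → Fin m → Bool) : Prop :=
  ∃ i j k : Fin n, i < j ∧ j < k ∧ ∃ p q : Fin m, p < q ∧
    M i p = true ∧ M j p = false ∧ M j q = true ∧ M k p = true

def P3 {n m : ℕ} (M : Fin n → Fin m → Bool) : Prop :=
  ∃ i j : Fin n, i < j ∧ ∃ p q r : Fin m, p < q ∧ q < r ∧
    M i q = true ∧ M j p = true ∧ M j q = false ∧ M j r = true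

theorem stmt_12 (M : Fin 4 → Fin 2 → Bool)
    (h00 : M 0 0 = true) (h10 : M 1 0 = false) (h11 : M 1 1 = true)
    (h20 : M 2 0 = true) (h21 : M 2 1 = false) (h31 : M 3 1 = true) :
    (P2 M ∨ P3 M) ∧ (P2 (fun i p => M i (1 - p)) ∨ P3 (fun i p => M i (1 - p))) ∧
    ¬ StickOrder M ∧ ¬ StickOrder (fun i p => M i (1 - p)) := by
  have e0 : (1 - 0 : Fin 2) = 1 := by decide
  have e1 : (1 - 1 : Fin 2) = 0 := by decide
  refine ⟨Or.inl ⟨0, 1, 2, by decide, by decide, 0, 1, by decide, h00, h10, h11, h20⟩,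
    Or.inl ⟨1, 2, 3, by decide, by decide, 0, 1, by decide, ?_, ?_, ?_, ?_⟩, ?_, ?_⟩
  · simpa [e0] using h11
  · simpa [e0] using h21
  · simpa [e1] using h20
  · simpa [e0] using h31
  · rintro ⟨ra, rb, hra, hrb, hne, hiff⟩
    have hA : ra 0 < rb 0 := ((hiff 0 0).mp h00).1
    have hC : ra 2 < rb 0 := ((hiff 2 0).mp h20).1
    have hB : ¬ ra 1 < rb 0 := by
      intro h
      have := (hiff 1 0).mpr ⟨h, ⟨1, by decide, h11⟩, ⟨0, by decide, h00⟩⟩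
      simp [h10] at this
    have h12 : ra 1 < ra 2 := hra (by decide)
    exact hB (lt_trans h12 hC)
  · rintro ⟨ra, rb, hra, hrb, hne, hiff⟩
    have h1 : ra 1 < rb 0 := ((hiff 1 0).mp (by simpa [e0] using h11)).1
    have h3 : ra 3 < rb 0 := ((hiff 3 0).mp (by simpa [e0] using h31)).1
    have h2 : ¬ ra 2 < rb 0 := by
      intro h
      have := (hiff 2 0).mpr ⟨h, ⟨1, by decide, by simpa [e1] using h20⟩,
        ⟨1, by decide, by simpa [e0] using h11⟩⟩
      simp only [e0] at this
      simp [h21] at this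
    exact h2 (lt_trans (hra (by decide : (2:Fin 4) < 3)) h3)
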